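/- (Convergence of optimal times) Let $T^*$ and $T^{*,1}_\varepsilon$ be the optimal times of the time optimal control problems $(TP)$ and $(TP^\varepsilon_1)$ for the heat equations with potentials $a$ and $a_\varepsilon$ respectively, with control bound $M$, target $\overline{B_K(0)}$ in $L^2(\Omega)$, and initial datum $y_0 \notin \overline{B_K(0)}$. Assume $\|a_\varepsilon - a\|_{L^\infty(\Omega)} \to 0$ and the decay condition $\|a\|_{L^\infty} < \lambda_1$ or $a \le 0$. Then $T^{*,1}_\varepsilon \to T^*$ as $\varepsilon \to 0^+$. -/

import Mathlib

set_option maxHeartbeats 1000000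


open Set Filter MeasureTheory intervalIntegral
open scoped RealInnerProductSpace Topology

/-- Mean value selection: on an interval of length `L`, an integrable nonnegative
function takes a value at most `2 L⁻¹ ∫ + δ₂` somewhere. -/
lemma stmt8_meanvalue (f : ℝ → ℝ) (b L δ₂ : ℝ) (hL : 0 < L) (hδ₂ : 0 < δ₂)
    (hf : IntegrableOn f (Set.Ioc (b - L) b) volume)
    (hf0 : ∀ s ∈ Set.Ioc (b - L) b, 0 ≤ f s) :
    ∃ τ ∈ Set.Ioc (b - L) b,
      f τ ≤ 2 * L⁻¹ * (∫ s in Set.Ioc (b - L) b, f s) + δ₂ := by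
  by_contra hcon
  push_neg at hcon
  set E := ∫ s in Set.Ioc (b - L) b, f s with hE
  have hE0 : 0 ≤ E := setIntegral_nonneg measurableSet_Ioc hf0
  have hconst : IntegrableOn (fun _ : ℝ => 2 * L⁻¹ * E + δ₂) (Set.Ioc (b - L) b) volume := by
    apply integrableOn_const measure_Ioc_lt_top.ne
  have hmono : ∫ _s in Set.Ioc (b - L) b, (2 * L⁻¹ * E + δ₂) ≤ E :=
    setIntegral_mono_on hconst hf measurableSet_Ioc (fun x hx => (hcon x hx).le)
  rw [setIntegral_const, measureReal_def, Real.volume_Ioc, smul_eq_mul] at hmono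
  rw [show b - (b - L) = L by ring] at hmono
  rw [ENNReal.toReal_ofReal hL.le] at hmono
  have hcalc : L * (2 * L⁻¹ * E + δ₂) = 2 * E + L * δ₂ := by
    field_simp
  nlinarith [mul_pos hL hδ₂]

/-- Uniform smallness of `‖S η y - y‖` for `η` small, `y` in a compact set. -/
lemma stmt8_unifsmall {H : Type*} [NormedAddCommGroup H] [InnerProductSpace ℝ H]
    (S : ℝ → H →L[ℝ] H)
    (hS0 : S 0 = ContinuousLinearMap.id ℝ H)
    (hScont : ∀ x : H, Continuous fun τ => S τ x)
    (hcontr : ∀ τ : ℝ, 0 ≤ τ → ‖S τ‖ ≤ 1)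
    (Kc : Set H) (hKc : IsCompact Kc) (δ₂ : ℝ) (hδ₂ : 0 < δ₂) :
    ∃ m₀ : ℝ, 0 < m₀ ∧ ∀ η : ℝ, 0 ≤ η → η ≤ m₀ → ∀ y ∈ Kc, ‖S η y - y‖ ≤ δ₂ := by
  classical
  have hr : ∀ y : H, ∃ r : ℝ, 0 < r ∧ ∀ η : ℝ, |η| ≤ r → ‖S η y - y‖ ≤ δ₂ / 3 := by
    intro y
    have hc : ContinuousAt (fun τ => S τ y) 0 := (hScont y).continuousAt
    have h0 : S 0 y = y := by rw [hS0]; rfl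
    rw [Metric.continuousAt_iff] at hc
    obtain ⟨r, hr0, hrr⟩ := hc (δ₂ / 3) (by linarith)
    refine ⟨r / 2, by linarith, fun η hη => ?_⟩
    have hd : dist η (0 : ℝ) < r := by
      rw [Real.dist_eq, sub_zero]
      linarith [abs_nonneg η]
    have := hrr hd
    rw [h0] at this
    rw [← dist_eq_norm]
    exact this.le
  choose r hr0 hrprop using hr
  have hcover : Kc ⊆ ⋃ y ∈ Kc, Metric.ball y (δ₂ / 3) := fun y hy =>
    Set.mem_biUnion hy (Metric.mem_ball_self (by linarith))
  obtain ⟨F, hFsub, hFfin, hFcover⟩ :=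
    hKc.elim_finite_subcover_image (fun y _ => Metric.isOpen_ball) hcover
  rcases F.eq_empty_or_nonempty with hFe | hFne
  · refine ⟨1, one_pos, fun η _ _ y hy => absurd (hFcover hy) ?_⟩
    simp [hFe]
  · set F' := hFfin.toFinset with hF'
    have hF'ne : F'.Nonempty := by
      rwa [hF', Set.Finite.toFinset_nonempty]
    set m₀ := F'.inf' hF'ne r with hm₀
    have hm₀pos : 0 < m₀ := by
      rw [hm₀, Finset.lt_inf'_iff]
      exact fun c _ => hr0 c
    refine ⟨m₀, hm₀pos, fun η hη0 hηm y hy => ?_⟩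
    obtain ⟨c, hcF, hyc⟩ := Set.mem_iUnion₂.mp (hFcover hy)
    have hm₀c : m₀ ≤ r c := Finset.inf'_le r (by rwa [hF', Set.Finite.mem_toFinset])
    have h2 : ‖y - c‖ < δ₂ / 3 := by
      rw [← dist_eq_norm]; exact hyc
    have h3 : ‖S η (y - c)‖ ≤ ‖y - c‖ := by
      calc ‖S η (y - c)‖ ≤ ‖S η‖ * ‖y - c‖ := (S η).le_opNorm _
        _ ≤ 1 * ‖y - c‖ := mul_le_mul_of_nonneg_right (hcontr η hη0) (norm_nonneg _)
        _ = ‖y - c‖ := one_mul _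
    have hdecomp : S η y - y = S η (y - c) + (S η c - c) + (c - y) := by
      rw [map_sub]; abel
    calc ‖S η y - y‖ = ‖S η (y - c) + (S η c - c) + (c - y)‖ := by rw [hdecomp]
      _ ≤ ‖S η (y - c) + (S η c - c)‖ + ‖c - y‖ := norm_add_le _ _
      _ ≤ ‖S η (y - c)‖ + ‖S η c - c‖ + ‖c - y‖ := by
          have := norm_add_le (S η (y - c)) (S η c - c); linarith
      _ ≤ ‖y - c‖ + δ₂ / 3 + ‖c - y‖ := by
          have h4 : η ≤ r c := le_trans hηm hm₀c
          have h1' : ‖S η c - c‖ ≤ δ₂ / 3 := hrprop c η (by rwa [abs_of_nonneg hη0])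
          linarith
      _ ≤ δ₂ := by
          have h5 : ‖c - y‖ = ‖y - c‖ := norm_sub_rev _ _
          linarith

/-- Closeness of the perturbed family to the semigroup, on `[0, TT]`. -/
lemma stmt8_opclose {H : Type*} [NormedAddCommGroup H] [InnerProductSpace ℝ H]
    [CompleteSpace H]
    (S Sq : ℝ → H →L[ℝ] H) (D : H →L[ℝ] H) (TT : ℝ) (hTT : 0 < TT)
    (hcontr : ∀ τ : ℝ, 0 ≤ τ → ‖S τ‖ ≤ 1)
    (hqc : ∀ x : H, Continuous fun τ => Sq τ x)
    (hpert : ∀ τ : ℝ, 0 ≤ τ → ∀ x : H,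
      Sq τ x = S τ x + ∫ σ in (0:ℝ)..τ, S (τ - σ) (D (Sq σ x)))
    (hsmall : ‖D‖ * TT ≤ 1 / 2) :
    ∀ τ : ℝ, 0 ≤ τ → τ ≤ TT → ∀ x : H, ‖Sq τ x - S τ x‖ ≤ 2 * ‖D‖ * TT * ‖x‖ := by
  intro τ hτ0 hτT x
  obtain ⟨z, hz, hzmax⟩ :=
    isCompact_Icc.exists_isMaxOn (Set.nonempty_Icc.mpr hTT.le)
      ((continuous_norm.comp (hqc x)).continuousOn :
        ContinuousOn (fun τ => ‖Sq τ x‖) (Set.Icc 0 TT))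
  set Mx := ‖Sq z x‖ with hMx
  have hMx0 : 0 ≤ Mx := norm_nonneg _
  have hIbound : ∀ σ : ℝ, 0 ≤ σ → σ ≤ TT →
      ‖∫ ρ in (0:ℝ)..σ, S (σ - ρ) (D (Sq ρ x))‖ ≤ ‖D‖ * Mx * σ := by
    intro σ h0 hT
    have hb : ∀ ρ ∈ Set.uIoc (0:ℝ) σ, ‖S (σ - ρ) (D (Sq ρ x))‖ ≤ ‖D‖ * Mx := by
      intro ρ hρ
      rw [Set.uIoc_of_le h0] at hρ
      have h1 : ‖S (σ - ρ) (D (Sq ρ x))‖ ≤ ‖S (σ - ρ)‖ * ‖D (Sq ρ x)‖ :=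
        (S (σ - ρ)).le_opNorm _
      have h2 : ‖S (σ - ρ)‖ ≤ 1 := hcontr _ (by linarith [hρ.2])
      have h3 : ‖D (Sq ρ x)‖ ≤ ‖D‖ * ‖Sq ρ x‖ := D.le_opNorm _
      have h4 : ‖Sq ρ x‖ ≤ Mx := hzmax ⟨hρ.1.le, hρ.2.trans hT⟩
      have h5 : (0:ℝ) ≤ ‖D‖ := norm_nonneg _
      calc ‖S (σ - ρ) (D (Sq ρ x))‖ ≤ ‖S (σ - ρ)‖ * ‖D (Sq ρ x)‖ := h1
        _ ≤ 1 * ‖D (Sq ρ x)‖ := mul_le_mul_of_nonneg_right h2 (norm_nonneg _)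
        _ = ‖D (Sq ρ x)‖ := one_mul _
        _ ≤ ‖D‖ * ‖Sq ρ x‖ := h3
        _ ≤ ‖D‖ * Mx := mul_le_mul_of_nonneg_left h4 h5
    have := intervalIntegral.norm_integral_le_of_norm_le_const hb
    rwa [sub_zero, abs_of_nonneg h0] at this
  have hkey : ∀ σ : ℝ, 0 ≤ σ → σ ≤ TT → ‖Sq σ x‖ ≤ ‖x‖ + ‖D‖ * Mx * TT := by
    intro σ h0 hT
    rw [hpert σ h0 x]
    have h1 : ‖S σ x‖ ≤ ‖x‖ := by
      calc ‖S σ x‖ ≤ ‖S σ‖ * ‖x‖ := (S σ).le_opNorm _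
        _ ≤ 1 * ‖x‖ := mul_le_mul_of_nonneg_right (hcontr σ h0) (norm_nonneg _)
        _ = ‖x‖ := one_mul _
    have h2 := hIbound σ h0 hT
    have h3 : ‖D‖ * Mx * σ ≤ ‖D‖ * Mx * TT :=
      mul_le_mul_of_nonneg_left hT (mul_nonneg (norm_nonneg _) hMx0)
    calc ‖S σ x + ∫ ρ in (0:ℝ)..σ, S (σ - ρ) (D (Sq ρ x))‖
        ≤ ‖S σ x‖ + ‖∫ ρ in (0:ℝ)..σ, S (σ - ρ) (D (Sq ρ x))‖ := norm_add_le _ _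
      _ ≤ ‖x‖ + ‖D‖ * Mx * TT := by linarith
  have hM2 : Mx ≤ 2 * ‖x‖ := by
    have hk := hkey z hz.1 hz.2
    have hp := mul_le_mul_of_nonneg_right hsmall hMx0
    nlinarith [norm_nonneg x, hk, hp]
  have h6 : Sq τ x - S τ x = ∫ σ in (0:ℝ)..τ, S (τ - σ) (D (Sq σ x)) := by
    rw [hpert τ hτ0 x]; abel
  rw [h6]
  have h7 := hIbound τ hτ0 hτT
  have h8 : ‖D‖ * Mx * τ ≤ ‖D‖ * (2 * ‖x‖) * TT := by
    have hD0 : (0:ℝ) ≤ ‖D‖ := norm_nonneg _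
    have e1 : ‖D‖ * Mx * τ ≤ ‖D‖ * Mx * TT :=
      mul_le_mul_of_nonneg_left hτT (mul_nonneg hD0 hMx0)
    have e2 : ‖D‖ * Mx * TT ≤ ‖D‖ * (2 * ‖x‖) * TT :=
      mul_le_mul_of_nonneg_right (mul_le_mul_of_nonneg_left hM2 hD0) hTT.le
    linarith
  calc ‖∫ σ in (0:ℝ)..τ, S (τ - σ) (D (Sq σ x))‖ ≤ ‖D‖ * Mx * τ := h7
    _ ≤ ‖D‖ * (2 * ‖x‖) * TT := h8
    _ = 2 * ‖D‖ * TT * ‖x‖ := by ring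

/-- The core transfer lemma: from a control steering the `Q₁`-system into the ball at
time `t`, build a control steering the `Q₂`-system close at time `t + h`. -/
lemma stmt8_core {H : Type*} [NormedAddCommGroup H] [InnerProductSpace ℝ H] [CompleteSpace H]
    (S Q₁ Q₂ : ℝ → H →L[ℝ] H) (R : H →L[ℝ] H) (M B' K delta0 t h κ ρ : ℝ) (y0 : H)
    (hM : 0 < M) (hB'0 : 0 ≤ B') (hRB : ∀ x : H, ‖x‖ ≤ M → ‖R x‖ ≤ B')
    (hK : 0 < K) (hd0 : 0 < delta0)
    (ht : 0 < t) (hh : 0 < h) (hκ0 : 0 ≤ κ) (hκ1 : κ ≤ 1) (hρ : 0 < ρ)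
    (hS0 : S 0 = ContinuousLinearMap.id ℝ H)
    (hsemi : ∀ a b : ℝ, 0 ≤ a → 0 ≤ b → S (a + b) = (S a).comp (S b))
    (hScont : ∀ x : H, Continuous fun τ => S τ x)
    (hcontr : ∀ τ : ℝ, 0 ≤ τ → ‖S τ‖ ≤ 1)
    (hSh : ‖S h‖ ≤ Real.exp (-delta0 * h))
    (hQ₁ : ∀ τ : ℝ, 0 ≤ τ → τ ≤ t → ∀ x : H, ‖Q₁ τ x - S τ x‖ ≤ κ * ‖x‖)
    (hQ₂ : ∀ τ : ℝ, 0 ≤ τ → τ ≤ t + h → ∀ x : H, ‖Q₂ τ x - S τ x‖ ≤ κ * ‖x‖)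
    (hQ₂c : ∀ x : H, Continuous fun τ => Q₂ τ x)
    (u : ℝ → H) (hu : ∀ s, ‖u s‖ ≤ M)
    (hV₁ : ‖Q₁ t y0 + ∫ s in (0:ℝ)..t, Q₁ (t - s) (R (u s))‖ ≤ K) :
    ∃ w : ℝ → H, (∀ s, ‖w s‖ ≤ M) ∧
      ‖Q₂ (t + h) y0 + ∫ s in (0:ℝ)..(t + h), Q₂ (t + h - s) (R (w s))‖ ≤
        Real.exp (-delta0 * h) * K + 2 * κ * ‖y0‖ + ρ + 2 * t * κ * B' := by
  classical
  have hexp1 : Real.exp (-delta0 * h) ≤ 1 := by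
    rw [← Real.exp_zero]
    exact Real.exp_le_exp.mpr (by nlinarith [mul_pos hd0 hh])
  have hexppos : 0 < Real.exp (-delta0 * h) := Real.exp_pos _
  have hSnorm : ∀ τ : ℝ, 0 ≤ τ → ∀ x : H, ‖S τ x‖ ≤ ‖x‖ := by
    intro τ hτ x
    calc ‖S τ x‖ ≤ ‖S τ‖ * ‖x‖ := (S τ).le_opNorm _
      _ ≤ 1 * ‖x‖ := mul_le_mul_of_nonneg_right (hcontr τ hτ) (norm_nonneg _)
      _ = ‖x‖ := one_mul _
  have hShx : ∀ x : H, ‖S h x‖ ≤ Real.exp (-delta0 * h) * ‖x‖ := by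
    intro x
    calc ‖S h x‖ ≤ ‖S h‖ * ‖x‖ := (S h).le_opNorm _
      _ ≤ Real.exp (-delta0 * h) * ‖x‖ := mul_le_mul_of_nonneg_right hSh (norm_nonneg _)
  have hsemiapp : ∀ a b : ℝ, 0 ≤ a → 0 ≤ b → ∀ x : H, S (a + b) x = S a (S b x) := by
    intro a b ha hb x
    rw [hsemi a b ha hb]; rfl
  by_cases hGi : IntervalIntegrable (fun s => Q₁ (t - s) (R (u s))) volume 0 t
  case neg =>
    refine ⟨fun _ => 0, fun s => by simpa using hM.le, ?_⟩
    have h1 : (∫ s in (0:ℝ)..(t + h), Q₂ (t + h - s) (R ((fun _ => (0:H)) s))) = 0 := by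
      simp
    rw [h1, add_zero]
    have h2 : (∫ s in (0:ℝ)..t, Q₁ (t - s) (R (u s))) = 0 :=
      intervalIntegral.integral_undef hGi
    rw [h2, add_zero] at hV₁
    have h3 : ‖Q₂ (t + h) y0‖ ≤ κ * ‖y0‖ + ‖S (t + h) y0‖ := by
      have hq := hQ₂ (t + h) (by linarith) le_rfl y0
      calc ‖Q₂ (t + h) y0‖ = ‖(Q₂ (t + h) y0 - S (t + h) y0) + S (t + h) y0‖ := by
            rw [sub_add_cancel]
        _ ≤ ‖Q₂ (t + h) y0 - S (t + h) y0‖ + ‖S (t + h) y0‖ := norm_add_le _ _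
        _ ≤ κ * ‖y0‖ + ‖S (t + h) y0‖ := by linarith
    have h4 : S (t + h) y0 = S h (S t y0) := by
      rw [show t + h = h + t by ring]
      exact hsemiapp h t hh.le ht.le y0
    have h5 : ‖S t y0‖ ≤ K + κ * ‖y0‖ := by
      have hq := hQ₁ t ht.le le_rfl y0
      have he : S t y0 = Q₁ t y0 - (Q₁ t y0 - S t y0) := (sub_sub_cancel _ _).symm
      calc ‖S t y0‖ = ‖Q₁ t y0 - (Q₁ t y0 - S t y0)‖ := by rw [← he]
        _ ≤ ‖Q₁ t y0‖ + ‖Q₁ t y0 - S t y0‖ := norm_sub_le _ _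
        _ ≤ K + κ * ‖y0‖ := by linarith
    have h6 : ‖S (t + h) y0‖ ≤ Real.exp (-delta0 * h) * (K + κ * ‖y0‖) := by
      rw [h4]
      calc ‖S h (S t y0)‖ ≤ Real.exp (-delta0 * h) * ‖S t y0‖ := hShx _
        _ ≤ Real.exp (-delta0 * h) * (K + κ * ‖y0‖) :=
            mul_le_mul_of_nonneg_left h5 hexppos.le
    have hy0n : (0:ℝ) ≤ ‖y0‖ := norm_nonneg _
    have hκy : Real.exp (-delta0 * h) * (κ * ‖y0‖) ≤ κ * ‖y0‖ := by
      have := mul_le_mul_of_nonneg_right hexp1 (mul_nonneg hκ0 hy0n)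
      linarith
    have htB : (0:ℝ) ≤ 2 * t * κ * B' := by positivity
    have h6' : Real.exp (-delta0 * h) * (K + κ * ‖y0‖) =
        Real.exp (-delta0 * h) * K + Real.exp (-delta0 * h) * (κ * ‖y0‖) := by ring
    rw [h6'] at h6
    linarith [mul_nonneg hκ0 hy0n]
  case pos =>
    set t₂ := t + h with ht₂def
    set G : ℝ → H := fun s => Q₁ (t - s) (R (u s)) with hGdef
    have hGptbd : ∀ s ∈ Set.Icc (0:ℝ) t, ‖G s‖ ≤ 2 * B' := by
      intro s hs
      have h1 : ‖R (u s)‖ ≤ B' := hRB _ (hu s)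
      have h2 := hQ₁ (t - s) (by linarith [hs.2]) (by linarith [hs.1]) (R (u s))
      have h3 := hSnorm (t - s) (by linarith [hs.2]) (R (u s))
      have h4 : ‖G s‖ ≤ ‖Q₁ (t - s) (R (u s)) - S (t - s) (R (u s))‖ +
          ‖S (t - s) (R (u s))‖ := by
        have hGs : G s = (Q₁ (t - s) (R (u s)) - S (t - s) (R (u s))) +
            S (t - s) (R (u s)) := by
          show Q₁ (t - s) (R (u s)) = _
          abel
        rw [hGs]
        exact norm_add_le _ _
      have h5 := mul_le_mul_of_nonneg_right hκ1 (norm_nonneg (R (u s)))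
      have h6 := mul_le_mul_of_nonneg_left h1 hκ0
      nlinarith [norm_nonneg (R (u s))]
    have hGIoc : IntegrableOn G (Set.Ioc 0 t) volume :=
      (intervalIntegrable_iff_integrableOn_Ioc_of_le ht.le).mp hGi
    set G₀ : ℝ → H := (Set.Ioc (0:ℝ) t).indicator G with hG₀def
    have hG₀ : Integrable G₀ volume := by
      rw [hG₀def, integrable_indicator_iff measurableSet_Ioc]
      exact hGIoc
    set δ₂ : ℝ := ρ / (1 + 16 * t) with hδ₂def
    have hδ₂pos : 0 < δ₂ := div_pos hρ (by linarith)
    set θ : ℝ := min 1 (ρ / (1 + 8 * t * B')) with hθdef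
    have hθpos : 0 < θ :=
      lt_min one_pos (div_pos hρ (by linarith [mul_nonneg ht.le hB'0]))
    have hθ1 : θ ≤ 1 := min_le_left _ _
    set δ : ℝ := θ * ρ / 16 with hδdef
    have hδpos : 0 < δ := by positivity
    obtain ⟨φ, hφsupp, hφδ, hφcont, hφint⟩ := hG₀.exists_hasCompactSupport_integral_sub_le hδpos
    have hφIoc : IntegrableOn φ (Set.Ioc 0 t) volume := hφcont.integrableOn_Ioc
    have hsubint : Integrable (fun s => ‖G₀ s - φ s‖) volume := (hG₀.sub hφint).norm
    have hδtot : ∫ s in Set.Ioc 0 t, ‖G s - φ s‖ ≤ δ := by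
      have h1 : ∫ s in Set.Ioc 0 t, ‖G s - φ s‖ = ∫ s in Set.Ioc 0 t, ‖G₀ s - φ s‖ := by
        apply setIntegral_congr_fun measurableSet_Ioc
        intro x hx
        simp only [hG₀def, Set.indicator_of_mem hx]
      rw [h1]
      exact le_trans
        (setIntegral_le_integral hsubint (Eventually.of_forall fun x => norm_nonneg _)) hφδ
    obtain ⟨m₀, hm₀pos, hm₀⟩ :=
      stmt8_unifsmall S hS0 hScont hcontr (φ '' Set.Icc 0 t)
        (isCompact_Icc.image hφcont) δ₂ hδ₂pos
    obtain ⟨m₁, hm₁pos, hm₁⟩ :=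
      Metric.uniformContinuousOn_iff.mp
        ((isCompact_Icc (a := (0:ℝ)) (b := t)).uniformContinuousOn_of_continuous
          hφcont.continuousOn) δ₂ hδ₂pos
    set mm : ℝ := min m₀ m₁ with hmmdef
    have hmm : 0 < mm := lt_min hm₀pos hm₁pos
    set n : ℕ := ⌈t / mm⌉₊ + 1 with hndef
    have hn0 : 0 < n := Nat.succ_pos _
    have hnR : (0:ℝ) < n := Nat.cast_pos.mpr hn0
    set ℓ : ℝ := t / n with hℓdef
    have hℓpos : 0 < ℓ := div_pos ht hnR
    have hℓmm : ℓ ≤ mm := by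
      rw [hℓdef, div_le_iff₀ hnR]
      have h1 : t / mm ≤ (n:ℝ) := by
        calc t / mm ≤ (⌈t / mm⌉₊ : ℝ) := Nat.le_ceil _
          _ ≤ (n:ℝ) := by
            rw [hndef]; push_cast; linarith
      rw [div_le_iff₀ hmm] at h1
      linarith [h1]
    set a : ℕ → ℝ := fun j => (j : ℝ) * ℓ with hadef
    have hat : a n = t := by
      rw [hadef]
      rw [hℓdef]
      field_simp
    have ha0 : a 0 = 0 := by simp [hadef]
    have hastep : ∀ j : ℕ, a (j + 1) = a j + ℓ := by
      intro j
      simp only [hadef]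
      push_cast
      ring
    have hamono : ∀ j : ℕ, (j:ℕ) ≤ n → a j ≤ t := by
      intro j hj
      have hjn : (j:ℝ) ≤ (n:ℝ) := Nat.cast_le.mpr hj
      have hmul : (j:ℝ) * ℓ ≤ (n:ℝ) * ℓ := mul_le_mul_of_nonneg_right hjn hℓpos.le
      rw [← hat]
      simpa [hadef] using hmul
    have ha0le : ∀ j : ℕ, 0 ≤ a j := by
      intro j
      have : (0:ℝ) ≤ (j:ℝ) * ℓ := mul_nonneg (Nat.cast_nonneg j) hℓpos.le
      simpa [hadef] using this
    have hθℓ : θ * ℓ ≤ ℓ := by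
      have := mul_le_mul_of_nonneg_right hθ1 hℓpos.le
      linarith
    have htagex : ∀ j : ℕ, j < n → ∃ τ ∈ Set.Ioc (a (j + 1) - θ * ℓ) (a (j + 1)),
        ‖G τ - φ τ‖ ≤ 2 * (θ * ℓ)⁻¹ *
          (∫ s in Set.Ioc (a (j + 1) - θ * ℓ) (a (j + 1)), ‖G s - φ s‖) + δ₂ := by
      intro j hj
      have hsub : Set.Ioc (a (j + 1) - θ * ℓ) (a (j + 1)) ⊆ Set.Ioc 0 t := by
        intro x hx
        have h1 : 0 ≤ a (j + 1) - θ * ℓ := by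
          rw [hastep]
          have := ha0le j
          linarith
        have h2 : a (j + 1) ≤ t := hamono (j + 1) hj
        exact ⟨lt_of_le_of_lt h1 hx.1, hx.2.trans h2⟩
      have hbig : IntegrableOn (fun s => ‖G s - φ s‖) (Set.Ioc 0 t) volume :=
        (hGIoc.sub hφIoc).norm
      have hfint : IntegrableOn (fun s => ‖G s - φ s‖)
          (Set.Ioc (a (j + 1) - θ * ℓ) (a (j + 1))) volume :=
        hbig.mono_set hsub
      have := stmt8_meanvalue (fun s => ‖G s - φ s‖) (a (j + 1)) (θ * ℓ) δ₂
        (mul_pos hθpos hℓpos) hδ₂pos hfint (fun s _ => norm_nonneg _)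
      exact this
    choose! τ hτprop using htagex
    have hτmem : ∀ j : ℕ, j < n → τ j ∈ Set.Ioc (a (j + 1) - θ * ℓ) (a (j + 1)) :=
      fun j hj => (hτprop j hj).1
    have hτval : ∀ j : ℕ, j < n → ‖G (τ j) - φ (τ j)‖ ≤ 2 * (θ * ℓ)⁻¹ *
        (∫ s in Set.Ioc (a (j + 1) - θ * ℓ) (a (j + 1)), ‖G s - φ s‖) + δ₂ :=
      fun j hj => (hτprop j hj).2
    have hτub : ∀ j : ℕ, j < n → τ j ≤ a (j + 1) := fun j hj => (hτmem j hj).2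
    have hτlb : ∀ j : ℕ, j < n → a j < τ j := by
      intro j hj
      have h1 := (hτmem j hj).1
      rw [hastep] at h1
      linarith
    have hτIcc : ∀ j : ℕ, j < n → τ j ∈ Set.Icc (0:ℝ) t := by
      intro j hj
      exact ⟨(ha0le j).trans (hτlb j hj).le, (hτub j hj).trans (hamono (j + 1) hj)⟩
    set w : ℝ → H := fun s =>
      if 0 < s ∧ s ≤ t ∧ s ≤ τ (⌈s / ℓ⌉₊ - 1) then u (τ (⌈s / ℓ⌉₊ - 1)) else 0 with hwdef
    have hwM : ∀ s, ‖w s‖ ≤ M := by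
      intro s
      simp only [hwdef]
      by_cases hc : 0 < s ∧ s ≤ t ∧ s ≤ τ (⌈s / ℓ⌉₊ - 1)
      · simp only [if_pos hc]; exact hu _
      · simp only [if_neg hc, norm_zero]; exact hM.le
    have hidx : ∀ j : ℕ, ∀ s : ℝ, s ∈ Set.Ioc (a j) (a (j + 1)) → ⌈s / ℓ⌉₊ - 1 = j := by
      intro j s hs
      have h1 : (j:ℝ) < s / ℓ := by
        rw [lt_div_iff₀ hℓpos]
        exact hs.1
      have h2 : s / ℓ ≤ ((j + 1 : ℕ) : ℝ) := by
        rw [div_le_iff₀ hℓpos]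
        push_cast
        have := hs.2
        rw [hadef] at this
        push_cast at this
        linarith
      have h3 : ⌈s / ℓ⌉₊ = j + 1 := by
        rw [Nat.ceil_eq_iff (Nat.succ_ne_zero j)]
        constructor
        · simpa using h1
        · exact h2
      rw [h3]
      omega
    have hwval1 : ∀ j : ℕ, j < n → ∀ s ∈ Set.Ioc (a j) (τ j), w s = u (τ j) := by
      intro j hj s hs
      have hsmem : s ∈ Set.Ioc (a j) (a (j + 1)) := ⟨hs.1, hs.2.trans (hτub j hj)⟩
      have hix := hidx j s hsmem
      have h0s : 0 < s := lt_of_le_of_lt (ha0le j) hs.1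
      have hst : s ≤ t := hsmem.2.trans (hamono (j + 1) hj)
      simp only [hwdef, hix]
      rw [if_pos ⟨h0s, hst, hs.2⟩]
    have hwval2 : ∀ j : ℕ, j < n → ∀ s ∈ Set.Ioc (τ j) (a (j + 1)), w s = 0 := by
      intro j hj s hs
      have hsmem : s ∈ Set.Ioc (a j) (a (j + 1)) := ⟨(hτlb j hj).trans hs.1, hs.2⟩
      have hix := hidx j s hsmem
      simp only [hwdef, hix]
      rw [if_neg]
      intro hc
      exact absurd hc.2.2 (not_le.mpr hs.1)
    have hwval3 : ∀ s : ℝ, t < s → w s = 0 := by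
      intro s hst
      simp only [hwdef]
      rw [if_neg]
      intro hc
      exact absurd hc.2.1 (not_le.mpr hst)
    set F₂ : ℝ → H := fun s => Q₂ (t₂ - s) (R (w s)) with hF₂def
    -- interval integral of ‖G - φ‖
    set NGφ : ℝ → ℝ := fun s => ‖G s - φ s‖ with hNdef
    have hNint : IntervalIntegrable NGφ volume 0 t := by
      rw [intervalIntegrable_iff_integrableOn_Ioc_of_le ht.le]
      exact (hGIoc.sub hφIoc).norm
    have hmemIcc : ∀ j : ℕ, j ≤ n → a j ∈ Set.uIcc (0:ℝ) t := by
      intro j hj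
      rw [Set.uIcc_of_le ht.le]
      exact ⟨ha0le j, hamono j hj⟩
    have hsubIcc : ∀ j : ℕ, j < n → Set.uIcc (a j) (a (j + 1)) ⊆ Set.uIcc (0:ℝ) t :=
      fun j hj => Set.uIcc_subset_uIcc (hmemIcc j (le_of_lt hj)) (hmemIcc (j + 1) hj)
    have hNpieces : ∀ j : ℕ, j < n → IntervalIntegrable NGφ volume (a j) (a (j + 1)) :=
      fun j hj => hNint.mono_set (hsubIcc j hj)
    have hGpieces : ∀ j : ℕ, j < n → IntervalIntegrable G volume (a j) (a (j + 1)) :=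
      fun j hj => hGi.mono_set (hsubIcc j hj)
    set dj : ℕ → ℝ := fun j => ∫ s in (a j)..(a (j + 1)), NGφ s with hdjdef
    have hdjnn : ∀ j : ℕ, j < n → 0 ≤ dj j := by
      intro j hj
      simp only [hdjdef]
      have hle : a j ≤ a (j + 1) := by rw [hastep]; linarith
      rw [intervalIntegral.integral_of_le hle]
      exact setIntegral_nonneg measurableSet_Ioc (fun x _ => norm_nonneg _)
    -- the big per-piece estimate
    have Hpiece : ∀ j : ℕ, j < n →
        IntervalIntegrable F₂ volume (a j) (a (j + 1)) ∧
        ‖(∫ s in (a j)..(a (j + 1)), F₂ s) - S h (∫ s in (a j)..(a (j + 1)), G s)‖ ≤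
          ℓ * (2 * κ * B') + 4 * ℓ * δ₂ + 2 * θ * ℓ * B' + (4 * θ⁻¹ + 1) * dj j := by
      intro j hj
      have hajτ : a j < τ j := hτlb j hj
      have hτaj1 : τ j ≤ a (j + 1) := hτub j hj
      have haj1 : a (j + 1) = a j + ℓ := hastep j
      have haj0 : 0 ≤ a j := ha0le j
      have haj1t : a (j + 1) ≤ t := hamono (j + 1) hj
      have hτt : τ j ≤ t := hτaj1.trans haj1t
      set c : H := R (u (τ j)) with hcdef
      have hcB : ‖c‖ ≤ B' := hRB _ (hu _)
      set mj : H := φ (τ j) with hmjdef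
      set ej : ℝ := 2 * (θ * ℓ)⁻¹ *
        (∫ s in Set.Ioc (a (j + 1) - θ * ℓ) (a (j + 1)), ‖G s - φ s‖) + δ₂ with hejdef
      have hGτφ : ‖G (τ j) - mj‖ ≤ ej := hτval j hj
      have hdj'int : ∫ s in Set.Ioc (a (j + 1) - θ * ℓ) (a (j + 1)), ‖G s - φ s‖ ≤ dj j := by
        have hsub2 : Set.Ioc (a (j + 1) - θ * ℓ) (a (j + 1)) ⊆ Set.Ioc (a j) (a (j + 1)) := by
          apply Set.Ioc_subset_Ioc_left
          rw [haj1]; linarith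
        have hint2 : IntegrableOn (fun s => ‖G s - φ s‖) (Set.Ioc (a j) (a (j + 1))) volume := by
          have := hNpieces j hj
          rw [intervalIntegrable_iff_integrableOn_Ioc_of_le (by rw [haj1]; linarith)] at this
          exact this
        have := setIntegral_mono_set hint2
          (Eventually.of_forall (fun x => norm_nonneg _)) (HasSubset.Subset.eventuallyLE hsub2)
        simp only [hdjdef]
        rw [intervalIntegral.integral_of_le (by rw [haj1]; linarith : a j ≤ a (j + 1))]
        exact this
      have hdj'nn : 0 ≤ ∫ s in Set.Ioc (a (j + 1) - θ * ℓ) (a (j + 1)), ‖G s - φ s‖ :=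
        setIntegral_nonneg measurableSet_Ioc (fun x _ => norm_nonneg _)
      have hejnn : 0 ≤ ej := by
        rw [hejdef]
        have hinv : (0:ℝ) ≤ (θ * ℓ)⁻¹ := (inv_nonneg).mpr (mul_pos hθpos hℓpos).le
        have := mul_nonneg (mul_nonneg (by norm_num : (0:ℝ) ≤ 2) hinv) hdj'nn
        linarith
      -- pointwise estimate
      have hpt : ∀ s ∈ Set.Ioc (a j) (τ j),
          ‖Q₂ (t₂ - s) c - S h mj‖ ≤ 2 * κ * B' + ej + δ₂ := by
        intro s hs
        have hs0 : 0 < s := lt_of_le_of_lt haj0 hs.1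
        have hsτ : s ≤ τ j := hs.2
        have h1 : ‖Q₂ (t₂ - s) c - S (t₂ - s) c‖ ≤ κ * B' := by
          have := hQ₂ (t₂ - s) (by rw [ht₂def]; linarith) (by rw [ht₂def]; linarith) c
          calc ‖Q₂ (t₂ - s) c - S (t₂ - s) c‖ ≤ κ * ‖c‖ := this
            _ ≤ κ * B' := mul_le_mul_of_nonneg_left hcB hκ0
        have h2 : S (t₂ - s) c = S h (S (τ j - s) (S (t - τ j) c)) := by
          have e1 : t₂ - s = h + ((τ j - s) + (t - τ j)) := by rw [ht₂def]; ring
          rw [e1, hsemiapp h ((τ j - s) + (t - τ j)) hh.le (by linarith),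
            hsemiapp (τ j - s) (t - τ j) (by linarith) (by linarith)]
        have h3 : ‖S (t - τ j) c - G (τ j)‖ ≤ κ * B' := by
          have hq := hQ₁ (t - τ j) (by linarith) (by linarith) c
          have : G (τ j) = Q₁ (t - τ j) c := by rw [hGdef]
          rw [this, norm_sub_rev]
          calc ‖Q₁ (t - τ j) c - S (t - τ j) c‖ ≤ κ * ‖c‖ := hq
            _ ≤ κ * B' := mul_le_mul_of_nonneg_left hcB hκ0
        have h5 : ‖S (τ j - s) mj - mj‖ ≤ δ₂ := by
          apply hm₀ (τ j - s) (by linarith)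
          · have : τ j - s < ℓ := by
              have := hs.1
              rw [haj1] at hτaj1
              linarith
            linarith [le_trans hℓmm (min_le_left m₀ m₁)]
          · exact ⟨τ j, hτIcc j hj, rfl⟩
        have h6 : ‖S (τ j - s) (S (t - τ j) c) - S (τ j - s) mj‖ ≤ κ * B' + ej := by
          rw [← map_sub]
          calc ‖S (τ j - s) (S (t - τ j) c - mj)‖ ≤ ‖S (t - τ j) c - mj‖ :=
              hSnorm _ (by linarith) _
            _ ≤ ‖S (t - τ j) c - G (τ j)‖ + ‖G (τ j) - mj‖ := by
                have : S (t - τ j) c - mj = (S (t - τ j) c - G (τ j)) + (G (τ j) - mj) := by abel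
                rw [this]; exact norm_add_le _ _
            _ ≤ κ * B' + ej := by linarith
        have h7 : ‖S (t₂ - s) c - S h mj‖ ≤ κ * B' + ej + δ₂ := by
          rw [h2, ← map_sub]
          calc ‖S h (S (τ j - s) (S (t - τ j) c) - mj)‖
              ≤ ‖S (τ j - s) (S (t - τ j) c) - mj‖ := hSnorm _ hh.le _
            _ ≤ ‖S (τ j - s) (S (t - τ j) c) - S (τ j - s) mj‖ + ‖S (τ j - s) mj - mj‖ := by
                have : S (τ j - s) (S (t - τ j) c) - mj =
                    (S (τ j - s) (S (t - τ j) c) - S (τ j - s) mj) + (S (τ j - s) mj - mj) := by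
                  abel
                rw [this]; exact norm_add_le _ _
            _ ≤ κ * B' + ej + δ₂ := by linarith
        calc ‖Q₂ (t₂ - s) c - S h mj‖
            ≤ ‖Q₂ (t₂ - s) c - S (t₂ - s) c‖ + ‖S (t₂ - s) c - S h mj‖ := by
              have : Q₂ (t₂ - s) c - S h mj =
                  (Q₂ (t₂ - s) c - S (t₂ - s) c) + (S (t₂ - s) c - S h mj) := by abel
              rw [this]; exact norm_add_le _ _
          _ ≤ 2 * κ * B' + ej + δ₂ := by linarith
      -- integrability and values on the two sub-pieces
      have hcont1 : Continuous (fun s => Q₂ (t₂ - s) c) :=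
        (hQ₂c c).comp (continuous_const.sub continuous_id)
      have hint1 : IntervalIntegrable (fun s => Q₂ (t₂ - s) c) volume (a j) (τ j) :=
        hcont1.intervalIntegrable _ _
      have hF₂eq1 : Set.EqOn (fun s => Q₂ (t₂ - s) c) F₂ (Set.Ioc (a j) (τ j)) := by
        intro s hs
        rw [hF₂def]
        simp only
        rw [hwval1 j hj s hs]
      have hint1' : IntervalIntegrable F₂ volume (a j) (τ j) := by
        rw [intervalIntegrable_iff_integrableOn_Ioc_of_le hajτ.le]
        exact ((intervalIntegrable_iff_integrableOn_Ioc_of_le hajτ.le).mp hint1).congr_fun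
          hF₂eq1 measurableSet_Ioc
      have hIeq1 : ∫ s in (a j)..(τ j), F₂ s = ∫ s in (a j)..(τ j), Q₂ (t₂ - s) c := by
        rw [intervalIntegral.integral_of_le hajτ.le, intervalIntegral.integral_of_le hajτ.le]
        exact (setIntegral_congr_fun measurableSet_Ioc hF₂eq1).symm
      have hF₂eq2 : Set.EqOn (fun _ : ℝ => (0:H)) F₂ (Set.Ioc (τ j) (a (j + 1))) := by
        intro s hs
        rw [hF₂def]
        simp only
        rw [hwval2 j hj s hs]
        simp
      have hint2' : IntervalIntegrable F₂ volume (τ j) (a (j + 1)) := by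
        rw [intervalIntegrable_iff_integrableOn_Ioc_of_le hτaj1]
        exact integrableOn_zero.congr_fun hF₂eq2 measurableSet_Ioc
      have hIeq2 : ∫ s in (τ j)..(a (j + 1)), F₂ s = 0 := by
        rw [intervalIntegral.integral_of_le hτaj1]
        rw [← setIntegral_congr_fun measurableSet_Ioc hF₂eq2]
        simp
      have hIsplit : ∫ s in (a j)..(a (j + 1)), F₂ s = ∫ s in (a j)..(τ j), F₂ s := by
        rw [← intervalIntegral.integral_add_adjacent_intervals hint1' hint2', hIeq2, add_zero]
      have hintF2full : IntervalIntegrable F₂ volume (a j) (a (j + 1)) :=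
        hint1'.trans hint2'
      refine ⟨hintF2full, ?_⟩
      -- E1
      have hE1 : ‖(∫ s in (a j)..(τ j), Q₂ (t₂ - s) c) - (τ j - a j) • S h mj‖ ≤
          (τ j - a j) * (2 * κ * B' + ej + δ₂) := by
        have hconst : IntervalIntegrable (fun _ : ℝ => S h mj) volume (a j) (τ j) :=
          intervalIntegrable_const
        have heq : (∫ s in (a j)..(τ j), Q₂ (t₂ - s) c) - (τ j - a j) • S h mj =
            ∫ s in (a j)..(τ j), (Q₂ (t₂ - s) c - S h mj) := by
          rw [intervalIntegral.integral_sub hint1 hconst, intervalIntegral.integral_const]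
        rw [heq]
        have := intervalIntegral.norm_integral_le_of_norm_le_const
          (C := 2 * κ * B' + ej + δ₂) (f := fun s => Q₂ (t₂ - s) c - S h mj)
          (a := a j) (b := τ j) ?_
        · rw [abs_of_nonneg (by linarith : (0:ℝ) ≤ τ j - a j), mul_comm] at this
          exact this
        · intro s hs
          rw [Set.uIoc_of_le hajτ.le] at hs
          exact hpt s hs
      -- E2
      have hmjbd : ‖mj‖ ≤ 2 * B' + ej := by
        have h1 : ‖G (τ j)‖ ≤ 2 * B' := hGptbd (τ j) (hτIcc j hj)
        calc ‖mj‖ = ‖G (τ j) - (G (τ j) - mj)‖ := by rw [sub_sub_cancel]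
          _ ≤ ‖G (τ j)‖ + ‖G (τ j) - mj‖ := norm_sub_le _ _
          _ ≤ 2 * B' + ej := by linarith
      have hE2 : ‖(τ j - a j) • S h mj - ℓ • S h mj‖ ≤ θ * ℓ * (2 * B' + ej) := by
        rw [← sub_smul, norm_smul, Real.norm_eq_abs]
        have h1 : |τ j - a j - ℓ| ≤ θ * ℓ := by
          rw [abs_le]
          constructor
          · have := (hτmem j hj).1
            rw [haj1] at this
            linarith
          · rw [haj1] at hτaj1
            linarith [(mul_pos hθpos hℓpos).le]
        have h2 : ‖S h mj‖ ≤ 2 * B' + ej := le_trans (hSnorm h hh.le mj) hmjbd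
        exact mul_le_mul h1 h2 (norm_nonneg _) (mul_nonneg hθpos.le hℓpos.le)
      -- E3
      have hφint2 : IntervalIntegrable (fun s => S h (φ s)) volume (a j) (a (j + 1)) :=
        ((S h).continuous.comp hφcont).intervalIntegrable _ _
      have hajle : a j ≤ a (j + 1) := by rw [haj1]; linarith
      have hE3 : ‖ℓ • S h mj - ∫ s in (a j)..(a (j + 1)), S h (φ s)‖ ≤ ℓ * δ₂ := by
        have heq : ℓ • S h mj - (∫ s in (a j)..(a (j + 1)), S h (φ s)) =
            ∫ s in (a j)..(a (j + 1)), (S h mj - S h (φ s)) := by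
          rw [intervalIntegral.integral_sub intervalIntegrable_const hφint2,
            intervalIntegral.integral_const]
          congr 1
          rw [haj1]
          congr 1
          ring
        rw [heq]
        have := intervalIntegral.norm_integral_le_of_norm_le_const (C := δ₂)
          (f := fun s => S h mj - S h (φ s)) (a := a j) (b := a (j + 1)) ?_
        · rw [abs_of_nonneg (by rw [haj1]; linarith : (0:ℝ) ≤ a (j+1) - a j)] at this
          calc ‖∫ s in (a j)..(a (j + 1)), (S h mj - S h (φ s))‖ ≤ δ₂ * (a (j+1) - a j) := this
            _ = ℓ * δ₂ := by rw [haj1]; ring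
        · intro s hs
          rw [Set.uIoc_of_le hajle] at hs
          show ‖S h mj - S h (φ s)‖ ≤ δ₂
          have hsIcc : s ∈ Set.Icc (0:ℝ) t := ⟨haj0.trans hs.1.le, hs.2.trans haj1t⟩
          have hdist : dist (τ j) s < m₁ := by
            rw [Real.dist_eq, abs_lt]
            have h1 := hs.1
            have h2 := hs.2
            rw [haj1] at h2 hτaj1
            have := hτlb j hj
            have hℓm₁ : ℓ ≤ m₁ := le_trans hℓmm (min_le_right m₀ m₁)
            constructor <;> linarith
          have := hm₁ (τ j) (hτIcc j hj) s hsIcc hdist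
          rw [← map_sub]
          calc ‖S h (mj - φ s)‖ ≤ ‖mj - φ s‖ := hSnorm h hh.le _
            _ ≤ δ₂ := by
              rw [hmjdef, ← dist_eq_norm]
              exact this.le
      -- E4/E5
      have hφint3 : IntervalIntegrable φ volume (a j) (a (j + 1)) :=
        hφcont.intervalIntegrable _ _
      have hE4 : (∫ s in (a j)..(a (j + 1)), S h (φ s)) =
          S h (∫ s in (a j)..(a (j + 1)), φ s) :=
        ContinuousLinearMap.intervalIntegral_comp_comm _ hφint3
      have hE5 : ‖S h (∫ s in (a j)..(a (j + 1)), φ s) -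
          S h (∫ s in (a j)..(a (j + 1)), G s)‖ ≤ dj j := by
        rw [← map_sub]
        refine le_trans (hSnorm h hh.le _) ?_
        rw [← intervalIntegral.integral_sub hφint3 (hGpieces j hj)]
        refine le_trans (intervalIntegral.norm_integral_le_integral_norm hajle) ?_
        simp only [hdjdef]
        have : ∀ s, ‖φ s - G s‖ = NGφ s := by
          intro s; rw [hNdef]; exact norm_sub_rev _ _
        simp only [this]
        exact le_rfl
      -- combine
      have hℓinv : ℓ * (θ * ℓ)⁻¹ = θ⁻¹ := by
        field_simp
      have hejℓ : ℓ * ej ≤ 2 * θ⁻¹ * dj j + ℓ * δ₂ := by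
        rw [hejdef]
        have h1 : ℓ * (2 * (θ * ℓ)⁻¹ *
            (∫ s in Set.Ioc (a (j + 1) - θ * ℓ) (a (j + 1)), ‖G s - φ s‖)) =
            2 * θ⁻¹ * (∫ s in Set.Ioc (a (j + 1) - θ * ℓ) (a (j + 1)), ‖G s - φ s‖) := by
          rw [← hℓinv]; ring
        have h2 : 2 * θ⁻¹ * (∫ s in Set.Ioc (a (j + 1) - θ * ℓ) (a (j + 1)), ‖G s - φ s‖) ≤
            2 * θ⁻¹ * dj j := by
          apply mul_le_mul_of_nonneg_left hdj'int
          exact mul_nonneg (by norm_num) (inv_nonneg.mpr hθpos.le)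
        calc ℓ * (2 * (θ * ℓ)⁻¹ *
            (∫ s in Set.Ioc (a (j + 1) - θ * ℓ) (a (j + 1)), ‖G s - φ s‖) + δ₂) =
            ℓ * (2 * (θ * ℓ)⁻¹ *
            (∫ s in Set.Ioc (a (j + 1) - θ * ℓ) (a (j + 1)), ‖G s - φ s‖)) + ℓ * δ₂ := by ring
          _ ≤ 2 * θ⁻¹ * dj j + ℓ * δ₂ := by rw [h1]; linarith
      have chain : ‖(∫ s in (a j)..(a (j + 1)), F₂ s) -
          S h (∫ s in (a j)..(a (j + 1)), G s)‖ ≤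
          (τ j - a j) * (2 * κ * B' + ej + δ₂) + θ * ℓ * (2 * B' + ej) + ℓ * δ₂ + dj j := by
        rw [hIsplit, hIeq1]
        set X1 := ∫ s in (a j)..(τ j), Q₂ (t₂ - s) c
        set X2 := (τ j - a j) • S h mj
        set X3 := ℓ • S h mj
        set X4 := ∫ s in (a j)..(a (j + 1)), S h (φ s)
        set Y := S h (∫ s in (a j)..(a (j + 1)), G s)
        have : X1 - Y = (X1 - X2) + (X2 - X3) + (X3 - X4) +
            (S h (∫ s in (a j)..(a (j + 1)), φ s) - Y) := by
          rw [← hE4]; abel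
        rw [this]
        calc ‖(X1 - X2) + (X2 - X3) + (X3 - X4) +
            (S h (∫ s in (a j)..(a (j + 1)), φ s) - Y)‖
            ≤ ‖(X1 - X2) + (X2 - X3) + (X3 - X4)‖ +
              ‖S h (∫ s in (a j)..(a (j + 1)), φ s) - Y‖ := norm_add_le _ _
          _ ≤ ‖(X1 - X2) + (X2 - X3)‖ + ‖X3 - X4‖ +
              ‖S h (∫ s in (a j)..(a (j + 1)), φ s) - Y‖ := by
              have := norm_add_le ((X1 - X2) + (X2 - X3)) (X3 - X4); linarith
          _ ≤ ‖X1 - X2‖ + ‖X2 - X3‖ + ‖X3 - X4‖ +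
              ‖S h (∫ s in (a j)..(a (j + 1)), φ s) - Y‖ := by
              have := norm_add_le (X1 - X2) (X2 - X3); linarith
          _ ≤ (τ j - a j) * (2 * κ * B' + ej + δ₂) + θ * ℓ * (2 * B' + ej) +
              ℓ * δ₂ + dj j := by
              have := hE1; have := hE2; have := hE3; have := hE5
              linarith
      have hτℓ : τ j - a j ≤ ℓ := by rw [haj1] at hτaj1; linarith
      have hfac : (0:ℝ) ≤ 2 * κ * B' + ej + δ₂ := by
        have := mul_nonneg (mul_nonneg (by norm_num : (0:ℝ) ≤ 2) hκ0) hB'0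
        linarith
      have h1 : (τ j - a j) * (2 * κ * B' + ej + δ₂) ≤ ℓ * (2 * κ * B' + ej + δ₂) :=
        mul_le_mul_of_nonneg_right hτℓ hfac
      have h2 : θ * ℓ * (2 * B' + ej) ≤ 2 * θ * ℓ * B' + ℓ * ej := by
        have h2a : θ * ℓ * ej ≤ ℓ * ej := mul_le_mul_of_nonneg_right hθℓ hejnn
        have h2b : θ * ℓ * (2 * B' + ej) = 2 * θ * ℓ * B' + θ * ℓ * ej := by ring
        rw [h2b]
        linarith
      calc ‖(∫ s in (a j)..(a (j + 1)), F₂ s) -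
          S h (∫ s in (a j)..(a (j + 1)), G s)‖
          ≤ (τ j - a j) * (2 * κ * B' + ej + δ₂) + θ * ℓ * (2 * B' + ej) + ℓ * δ₂ + dj j :=
            chain
        _ ≤ ℓ * (2 * κ * B' + ej + δ₂) + (2 * θ * ℓ * B' + ℓ * ej) + ℓ * δ₂ + dj j := by
            linarith
        _ = ℓ * (2 * κ * B') + 2 * (ℓ * ej) + 2 * (ℓ * δ₂) + 2 * θ * ℓ * B' + dj j := by
            ring
        _ ≤ ℓ * (2 * κ * B') + 2 * (2 * θ⁻¹ * dj j + ℓ * δ₂) + 2 * (ℓ * δ₂) +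
            2 * θ * ℓ * B' + dj j := by linarith [hejℓ]
        _ = ℓ * (2 * κ * B') + 4 * ℓ * δ₂ + 2 * θ * ℓ * B' + (4 * θ⁻¹ + 1) * dj j := by
            ring
    -- summation over pieces
    have hpieceint : ∀ k : ℕ, k < n → IntervalIntegrable F₂ volume (a k) (a (k + 1)) :=
      fun k hk => (Hpiece k hk).1
    have hsumF : ∑ k ∈ Finset.range n, ∫ s in (a k)..(a (k + 1)), F₂ s =
        ∫ s in (0:ℝ)..t, F₂ s := by
      have := intervalIntegral.sum_integral_adjacent_intervals hpieceint
      rwa [ha0, hat] at this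
    have hItF : IntervalIntegrable F₂ volume 0 t := by
      have := IntervalIntegrable.trans_iterate hpieceint
      rwa [ha0, hat] at this
    have hF₂tail : Set.EqOn (fun _ : ℝ => (0:H)) F₂ (Set.Ioc t t₂) := by
      intro s hs
      rw [hF₂def]
      simp only
      rw [hwval3 s hs.1]
      simp
    have htt₂ : t ≤ t₂ := by rw [ht₂def]; linarith
    have hItail : IntervalIntegrable F₂ volume t t₂ := by
      rw [intervalIntegrable_iff_integrableOn_Ioc_of_le htt₂]
      exact integrableOn_zero.congr_fun hF₂tail measurableSet_Ioc
    have hItailval : ∫ s in t..t₂, F₂ s = 0 := by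
      rw [intervalIntegral.integral_of_le htt₂]
      rw [← setIntegral_congr_fun measurableSet_Ioc hF₂tail]
      simp
    have htotF : ∫ s in (0:ℝ)..t₂, F₂ s = ∫ s in (0:ℝ)..t, F₂ s := by
      rw [← intervalIntegral.integral_add_adjacent_intervals hItF hItail, hItailval, add_zero]
    have hsumG : ∑ k ∈ Finset.range n, ∫ s in (a k)..(a (k + 1)), G s =
        ∫ s in (0:ℝ)..t, G s := by
      have := intervalIntegral.sum_integral_adjacent_intervals hGpieces
      rwa [ha0, hat] at this
    have hsumdj : ∑ k ∈ Finset.range n, dj k = ∫ s in (0:ℝ)..t, NGφ s := by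
      have := intervalIntegral.sum_integral_adjacent_intervals hNpieces
      rwa [ha0, hat] at this
    have hsumdjle : ∑ k ∈ Finset.range n, dj k ≤ δ := by
      rw [hsumdj, intervalIntegral.integral_of_le ht.le]
      exact hδtot
    -- main estimate
    have hmain : ‖(∫ s in (0:ℝ)..t₂, F₂ s) - S h (∫ s in (0:ℝ)..t, G s)‖ ≤
        ρ + 2 * t * κ * B' := by
      rw [htotF, ← hsumF, ← hsumG, map_sum, ← Finset.sum_sub_distrib]
      refine le_trans (norm_sum_le _ _) ?_
      have hbd : ∀ k ∈ Finset.range n,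
          ‖(∫ s in (a k)..(a (k + 1)), F₂ s) - S h (∫ s in (a k)..(a (k + 1)), G s)‖ ≤
          (ℓ * (2 * κ * B') + 4 * ℓ * δ₂ + 2 * θ * ℓ * B') + (4 * θ⁻¹ + 1) * dj k := by
        intro k hk
        have := (Hpiece k (Finset.mem_range.mp hk)).2
        linarith
      refine le_trans (Finset.sum_le_sum hbd) ?_
      rw [Finset.sum_add_distrib, Finset.sum_const, Finset.card_range, ← Finset.mul_sum]
      have hnℓ : (n:ℝ) * ℓ = t := by rw [hℓdef]; field_simp
      have hsmul : n • (ℓ * (2 * κ * B') + 4 * ℓ * δ₂ + 2 * θ * ℓ * B') =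
          t * (2 * κ * B') + 4 * t * δ₂ + 2 * θ * t * B' := by
        rw [nsmul_eq_mul, ← hnℓ]; ring
      rw [hsmul]
      have hterm1 : 4 * t * δ₂ ≤ ρ / 4 := by
        have e : δ₂ * (1 + 16 * t) = ρ := by
          rw [hδ₂def]; field_simp
        nlinarith [e, mul_nonneg ht.le hδ₂pos.le, hδ₂pos.le]
      have hterm2 : 2 * θ * t * B' ≤ ρ / 4 := by
        have hθle : θ ≤ ρ / (1 + 8 * t * B') := min_le_right _ _
        have hpos : (0:ℝ) < 1 + 8 * t * B' := by linarith [mul_nonneg ht.le hB'0]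
        have hq : (ρ / (1 + 8 * t * B')) * (1 + 8 * t * B') = ρ := by field_simp
        have hqnn : (0:ℝ) ≤ ρ / (1 + 8 * t * B') := le_of_lt (div_pos hρ hpos)
        have h1 : θ * (2 * t * B') ≤ (ρ / (1 + 8 * t * B')) * (2 * t * B') :=
          mul_le_mul_of_nonneg_right hθle (by positivity)
        nlinarith [h1, hq, hqnn]
      have hterm3 : (4 * θ⁻¹ + 1) * (∑ k ∈ Finset.range n, dj k) ≤ ρ / 4 + ρ / 16 := by
        have hcoeff : (0:ℝ) ≤ 4 * θ⁻¹ + 1 := by positivity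
        have h1 : (4 * θ⁻¹ + 1) * (∑ k ∈ Finset.range n, dj k) ≤ (4 * θ⁻¹ + 1) * δ :=
          mul_le_mul_of_nonneg_left hsumdjle hcoeff
        have h2 : (4 * θ⁻¹ + 1) * δ = ρ / 4 + θ * ρ / 16 := by
          rw [hδdef]
          field_simp
          ring
        have h3 : θ * ρ / 16 ≤ ρ / 16 := by
          have := mul_le_mul_of_nonneg_right hθ1 hρ.le
          linarith
        linarith
      have ht2B : t * (2 * κ * B') = 2 * t * κ * B' := by ring
      linarith [hterm1, hterm2, hterm3]
    -- final assembly
    refine ⟨w, hwM, ?_⟩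
    have hVgoal : Q₂ t₂ y0 + (∫ s in (0:ℝ)..t₂, F₂ s) =
        (Q₂ t₂ y0 - S t₂ y0) + S h (S t y0 - Q₁ t y0) +
        S h (Q₁ t y0 + ∫ s in (0:ℝ)..t, G s) +
        ((∫ s in (0:ℝ)..t₂, F₂ s) - S h (∫ s in (0:ℝ)..t, G s)) := by
      have hsplit : S t₂ y0 = S h (S t y0) := by
        rw [ht₂def, show t + h = h + t by ring]
        exact hsemiapp h t hh.le ht.le y0
      have e1 : S h (S t y0 - Q₁ t y0) = S h (S t y0) - S h (Q₁ t y0) := map_sub _ _ _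
      have e2 : S h (Q₁ t y0 + ∫ s in (0:ℝ)..t, G s) =
          S h (Q₁ t y0) + S h (∫ s in (0:ℝ)..t, G s) := map_add _ _ _
      rw [e1, e2, hsplit]
      abel
    have hn1 : ‖Q₂ t₂ y0 - S t₂ y0‖ ≤ κ * ‖y0‖ := by
      have := hQ₂ t₂ (by rw [ht₂def]; linarith) (by rw [ht₂def]) y0
      exact this
    have hn2 : ‖S h (S t y0 - Q₁ t y0)‖ ≤ κ * ‖y0‖ := by
      refine le_trans (hSnorm h hh.le _) ?_
      rw [norm_sub_rev]
      exact hQ₁ t ht.le le_rfl y0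
    have hn3 : ‖S h (Q₁ t y0 + ∫ s in (0:ℝ)..t, G s)‖ ≤ Real.exp (-delta0 * h) * K := by
      refine le_trans (hShx _) ?_
      exact mul_le_mul_of_nonneg_left hV₁ hexppos.le
    calc ‖Q₂ t₂ y0 + ∫ s in (0:ℝ)..t₂, F₂ s‖
        ≤ ‖(Q₂ t₂ y0 - S t₂ y0) + S h (S t y0 - Q₁ t y0) +
            S h (Q₁ t y0 + ∫ s in (0:ℝ)..t, G s)‖ +
          ‖(∫ s in (0:ℝ)..t₂, F₂ s) - S h (∫ s in (0:ℝ)..t, G s)‖ := by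
          rw [hVgoal]; exact norm_add_le _ _
      _ ≤ ‖(Q₂ t₂ y0 - S t₂ y0) + S h (S t y0 - Q₁ t y0)‖ +
          ‖S h (Q₁ t y0 + ∫ s in (0:ℝ)..t, G s)‖ +
          ‖(∫ s in (0:ℝ)..t₂, F₂ s) - S h (∫ s in (0:ℝ)..t, G s)‖ := by
          have := norm_add_le ((Q₂ t₂ y0 - S t₂ y0) + S h (S t y0 - Q₁ t y0))
            (S h (Q₁ t y0 + ∫ s in (0:ℝ)..t, G s))
          linarith
      _ ≤ ‖Q₂ t₂ y0 - S t₂ y0‖ + ‖S h (S t y0 - Q₁ t y0)‖ +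
          ‖S h (Q₁ t y0 + ∫ s in (0:ℝ)..t, G s)‖ +
          ‖(∫ s in (0:ℝ)..t₂, F₂ s) - S h (∫ s in (0:ℝ)..t, G s)‖ := by
          have := norm_add_le (Q₂ t₂ y0 - S t₂ y0) (S h (S t y0 - Q₁ t y0))
          linarith
      _ ≤ Real.exp (-delta0 * h) * K + 2 * κ * ‖y0‖ + ρ + 2 * t * κ * B' := by
          linarith [hmain]

/-- Convergence of optimal times: Model the heat equations
`y_t - Δy - ay = χ_ω u` and `y_t - Δy - a_ε y = χ_ω u` via the semigroups
`S`, `S^ε` (Duhamel perturbation formula with bounded multiplication operators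
`A`, `A_ε`, where `‖A_ε - A‖ → 0` encodes `‖a_ε - a‖_∞ → 0`), the control
operator `R = χ_ω`, and mild solutions `ysol u t = S t y₀ + ∫₀ᵗ S(t-s) R(u s) ds`
(similarly `ysoleps`).  Assume the decay `‖S t‖ ≤ e^{-δ₀ t}` (from `‖a‖_∞ < λ₁`
or `a ≤ 0`), `‖y₀‖ > K` and `M > 0`.  Then the optimal times satisfy
`T^{*,1}_ε → T^*` as `ε → 0⁺`. -/
theorem stmt8 {H : Type*} [NormedAddCommGroup H] [InnerProductSpace ℝ H] [CompleteSpace H]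
    (K M delta0 : ℝ) (hK : 0 < K) (hM : 0 < M) (hdelta0 : 0 < delta0)
    (S : ℝ → H →L[ℝ] H) (Seps : ℝ → ℝ → H →L[ℝ] H)
    (A : H →L[ℝ] H) (Aeps : ℝ → H →L[ℝ] H) (R : H →L[ℝ] H) (y0 : H)
    (hy0 : K < ‖y0‖)
    (hS0 : S 0 = ContinuousLinearMap.id ℝ H)
    (hsemi : ∀ s t : ℝ, 0 ≤ s → 0 ≤ t → S (s + t) = (S s).comp (S t))
    (hScont : ∀ x : H, Continuous fun t => S t x)
    (hSepscont : ∀ ε : ℝ, 0 < ε → ∀ x : H, Continuous fun t => Seps ε t x)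
    (hdecay : ∀ t : ℝ, 0 ≤ t → ‖S t‖ ≤ Real.exp (-delta0 * t))
    (hAconv : Tendsto (fun ε => ‖Aeps ε - A‖) (𝓝[>] (0:ℝ)) (𝓝 0))
    (hpert : ∀ ε : ℝ, 0 < ε → ∀ t : ℝ, 0 ≤ t → ∀ x : H,
      Seps ε t x = S t x + ∫ s in (0:ℝ)..t, S (t - s) ((Aeps ε - A) (Seps ε s x)))
    (ysol : (ℝ → H) → ℝ → H) (ysoleps : ℝ → (ℝ → H) → ℝ → H)
    (hysol : ∀ (u : ℝ → H) (t : ℝ),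
      ysol u t = S t y0 + ∫ s in (0:ℝ)..t, S (t - s) (R (u s)))
    (hysoleps : ∀ (ε : ℝ) (u : ℝ → H) (t : ℝ),
      ysoleps ε u t = Seps ε t y0 + ∫ s in (0:ℝ)..t, Seps ε (t - s) (R (u s))) :
    Tendsto
      (fun ε => sInf {t : ℝ | 0 < t ∧ ∃ u : ℝ → H,
        (∀ s : ℝ, ‖u s‖ ≤ M) ∧ ‖ysoleps ε u t‖ ≤ K})
      (𝓝[>] (0:ℝ))
      (𝓝 (sInf {t : ℝ | 0 < t ∧ ∃ u : ℝ → H,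
        (∀ s : ℝ, ‖u s‖ ≤ M) ∧ ‖ysol u t‖ ≤ K})) := by
  classical
  have hcontr : ∀ τ : ℝ, 0 ≤ τ → ‖S τ‖ ≤ 1 := by
    intro τ hτ
    refine le_trans (hdecay τ hτ) ?_
    rw [← Real.exp_zero]
    exact Real.exp_le_exp.mpr (by nlinarith [mul_nonneg hdelta0.le hτ])
  set B' : ℝ := ‖R‖ * M with hB'def
  have hB'0 : 0 ≤ B' := mul_nonneg (norm_nonneg _) hM.le
  have hRB : ∀ x : H, ‖x‖ ≤ M → ‖R x‖ ≤ B' := by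
    intro x hx
    calc ‖R x‖ ≤ ‖R‖ * ‖x‖ := R.le_opNorm _
      _ ≤ ‖R‖ * M := mul_le_mul_of_nonneg_left hx (norm_nonneg _)
  set Bset : Set ℝ := {t : ℝ | 0 < t ∧ ∃ u : ℝ → H,
    (∀ s : ℝ, ‖u s‖ ≤ M) ∧ ‖ysol u t‖ ≤ K} with hBsetdef
  set T₀ : ℝ := Real.log (‖y0‖ / K) / delta0 + 1 with hT₀def
  have hy0pos : 0 < ‖y0‖ := lt_trans hK hy0
  have hy0K : 1 < ‖y0‖ / K := (one_lt_div hK).mpr hy0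
  have hlogpos : 0 < Real.log (‖y0‖ / K) := Real.log_pos hy0K
  have hT₀pos : 0 < T₀ := by
    rw [hT₀def]
    have : 0 < Real.log (‖y0‖ / K) / delta0 := div_pos hlogpos hdelta0
    linarith
  have hT₀exp : Real.exp (-delta0 * T₀) * ‖y0‖ ≤ K := by
    have h1 : Real.exp (-delta0 * T₀) =
        Real.exp (-Real.log (‖y0‖ / K)) * Real.exp (-delta0) := by
      rw [← Real.exp_add]
      congr 1
      rw [hT₀def]
      field_simp
      ring
    rw [Real.exp_neg, Real.exp_log (by positivity : (0:ℝ) < ‖y0‖ / K)] at h1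
    have h2 : (‖y0‖ / K)⁻¹ = K / ‖y0‖ := by
      rw [inv_div]
    rw [h2] at h1
    rw [h1]
    have h3 : K / ‖y0‖ * Real.exp (-delta0) * ‖y0‖ = K * Real.exp (-delta0) := by
      field_simp
    rw [h3]
    have h4 : Real.exp (-delta0) ≤ 1 := by
      rw [← Real.exp_zero]
      exact Real.exp_le_exp.mpr (by linarith)
    have := mul_le_mul_of_nonneg_left h4 hK.le
    linarith
  have hT₀mem : T₀ ∈ Bset := by
    refine ⟨hT₀pos, fun _ => 0, fun s => by simpa using hM.le, ?_⟩
    rw [hysol]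
    have hz : (∫ s in (0:ℝ)..T₀, S (T₀ - s) (R 0)) = 0 := by simp
    rw [hz, add_zero]
    calc ‖S T₀ y0‖ ≤ ‖S T₀‖ * ‖y0‖ := (S T₀).le_opNorm _
      _ ≤ Real.exp (-delta0 * T₀) * ‖y0‖ :=
          mul_le_mul_of_nonneg_right (hdecay T₀ hT₀pos.le) (norm_nonneg _)
      _ ≤ K := hT₀exp
  have hBne : Bset.Nonempty := ⟨T₀, hT₀mem⟩
  have hBbdd : BddBelow Bset := ⟨0, fun x hx => hx.1.le⟩
  set Tstar : ℝ := sInf Bset with hTstardef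
  have hTstar0 : 0 ≤ Tstar := le_csInf hBne (fun x hx => hx.1.le)
  have hTstarT₀ : Tstar ≤ T₀ := csInf_le hBbdd hT₀mem
  set TT : ℝ := T₀ + 2 with hTTdef
  have hTTpos : 0 < TT := by rw [hTTdef]; linarith
  rw [Metric.tendsto_nhds]
  intro δ' hδ'
  set h : ℝ := min δ' 2 / 4 with hhdef
  have hhpos : 0 < h := by
    rw [hhdef]
    have : 0 < min δ' 2 := lt_min hδ' (by norm_num)
    linarith
  have hhhalf : h ≤ 1 / 2 := by
    rw [hhdef]
    have : min δ' 2 ≤ 2 := min_le_right _ _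
    linarith
  have hhδ' : 4 * h ≤ δ' := by
    rw [hhdef]
    have : min δ' 2 ≤ δ' := min_le_left _ _
    linarith
  set ρ : ℝ := (1 - Real.exp (-delta0 * h)) * K / 2 with hρdef
  have hexplt1 : Real.exp (-delta0 * h) < 1 := by
    rw [← Real.exp_zero]
    exact Real.exp_lt_exp.mpr (by nlinarith [mul_pos hdelta0 hhpos])
  have hρpos : 0 < ρ := by
    rw [hρdef]
    exact div_pos (mul_pos (by linarith) hK) (by norm_num)
  have hXpos : (0:ℝ) < 2 * ‖y0‖ + 2 * TT * B' + 1 := by positivity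
  set ηth : ℝ := min (1 / (2 * TT)) (ρ / (2 * TT * (2 * ‖y0‖ + 2 * TT * B' + 1))) with hηthdef
  have hηthpos : 0 < ηth := lt_min (by positivity) (by positivity)
  have hev1 : ∀ᶠ ε in 𝓝[>] (0:ℝ), ‖Aeps ε - A‖ < ηth :=
    hAconv.eventually_lt_const hηthpos
  have hev2 : ∀ᶠ ε in 𝓝[>] (0:ℝ), ε ∈ Set.Ioi (0:ℝ) := eventually_mem_nhdsWithin
  filter_upwards [hev1, hev2] with ε hηε hεpos
  replace hεpos : (0:ℝ) < ε := hεpos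
  set η : ℝ := ‖Aeps ε - A‖ with hηdef
  have hη0 : 0 ≤ η := norm_nonneg _
  set κ : ℝ := 2 * η * TT with hκdef
  clear_value B' T₀ Tstar TT h ρ ηth η κ
  have hκ0 : 0 ≤ κ := by
    rw [hκdef]
    exact mul_nonneg (mul_nonneg (by norm_num) hη0) hTTpos.le
  rw [hηthdef] at hηε
  have hηsmall : η * TT ≤ 1 / 2 := by
    have h1 : η < 1 / (2 * TT) := lt_of_lt_of_le hηε (min_le_left _ _)
    rw [lt_div_iff₀ (by positivity)] at h1
    have e : η * (2 * TT) = 2 * (η * TT) := by ring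
    linarith [h1, e]
  have hκ1 : κ ≤ 1 := by
    rw [hκdef]
    have e : 2 * η * TT = 2 * (η * TT) := by ring
    linarith [hηsmall, e]
  have hopclose := stmt8_opclose S (Seps ε) (Aeps ε - A) TT hTTpos hcontr
    (hSepscont ε hεpos) (fun τ hτ x => hpert ε hεpos τ hτ x)
    (by rw [← hηdef]; exact hηsmall)
  have hQcl : ∀ τ : ℝ, 0 ≤ τ → τ ≤ TT → ∀ x : H, ‖Seps ε τ x - S τ x‖ ≤ κ * ‖x‖ := by
    intro τ hτ0 hτT x
    have hcl := hopclose τ hτ0 hτT x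
    rw [hκdef, hηdef]
    exact hcl
  have hκsmall : κ * (2 * ‖y0‖ + 2 * TT * B' + 1) ≤ ρ := by
    have h1 : η ≤ ρ / (2 * TT * (2 * ‖y0‖ + 2 * TT * B' + 1)) :=
      le_trans hηε.le (min_le_right _ _)
    have h2 : η * (2 * TT * (2 * ‖y0‖ + 2 * TT * B' + 1)) ≤ ρ := by
      rw [← le_div_iff₀ (by positivity)]
      exact h1
    rw [hκdef]
    have e : 2 * η * TT * (2 * ‖y0‖ + 2 * TT * B' + 1) =
        η * (2 * TT * (2 * ‖y0‖ + 2 * TT * B' + 1)) := by ring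
    linarith [h2, e]
  -- Direction 1 : Tε ≤ Tstar + 2h
  obtain ⟨t₁, ht₁B, ht₁lt⟩ := exists_lt_of_csInf_lt hBne
    (show sInf Bset < Tstar + h by rw [← hTstardef]; linarith)
  obtain ⟨ht₁pos, u₁, hu₁, hyt₁⟩ := ht₁B
  rw [hysol] at hyt₁
  have ht₁T₀ : t₁ ≤ T₀ + 1 / 2 := by linarith
  have ht₁hTT : t₁ + h ≤ TT := by rw [hTTdef]; linarith
  obtain ⟨w₁, hw₁M, hw₁val⟩ := stmt8_core S S (Seps ε) R M B' K delta0 t₁ h κ ρ y0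
    hM hB'0 hRB hK hdelta0 ht₁pos hhpos hκ0 hκ1 hρpos hS0 hsemi hScont hcontr
    (hdecay h hhpos.le)
    (fun τ _ _ x => by rw [sub_self, norm_zero]; exact mul_nonneg hκ0 (norm_nonneg x))
    (fun τ hτ0 hτle x => hQcl τ hτ0 (hτle.trans ht₁hTT) x)
    (hSepscont ε hεpos) u₁ hu₁ hyt₁
  have harith : ∀ t' : ℝ, 0 < t' → t' ≤ TT →
      Real.exp (-delta0 * h) * K + 2 * κ * ‖y0‖ + ρ + 2 * t' * κ * B' ≤ K := by
    intro t' ht'pos ht'TT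
    have h1 : 2 * t' * κ * B' ≤ 2 * TT * κ * B' := by
      have e := mul_le_mul_of_nonneg_right (mul_le_mul_of_nonneg_right ht'TT hκ0) hB'0
      linarith [e]
    have h2 : 2 * κ * ‖y0‖ + 2 * TT * κ * B' ≤ κ * (2 * ‖y0‖ + 2 * TT * B' + 1) := by
      have e : κ * (2 * ‖y0‖ + 2 * TT * B' + 1) =
          2 * κ * ‖y0‖ + 2 * TT * κ * B' + κ := by ring
      rw [e]
      linarith
    have h3 : Real.exp (-delta0 * h) * K = K - 2 * ρ := by rw [hρdef]; ring
    linarith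
  have hmem1 : (t₁ + h) ∈ {t : ℝ | 0 < t ∧ ∃ u : ℝ → H,
      (∀ s : ℝ, ‖u s‖ ≤ M) ∧ ‖ysoleps ε u t‖ ≤ K} := by
    refine ⟨by linarith, w₁, hw₁M, ?_⟩
    rw [hysoleps]
    exact le_trans hw₁val (harith t₁ ht₁pos (by linarith))
  set Bε : Set ℝ := {t : ℝ | 0 < t ∧ ∃ u : ℝ → H,
    (∀ s : ℝ, ‖u s‖ ≤ M) ∧ ‖ysoleps ε u t‖ ≤ K} with hBεdef
  have hBεne : Bε.Nonempty := ⟨t₁ + h, hmem1⟩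
  have hBεbdd : BddBelow Bε := ⟨0, fun x hx => hx.1.le⟩
  have hTεub : sInf Bε ≤ t₁ + h := csInf_le hBεbdd hmem1
  set Tε : ℝ := sInf Bε with hTεdef
  have hTε0 : 0 ≤ Tε := le_csInf hBεne (fun x hx => hx.1.le)
  -- Direction 2 : Tstar ≤ Tε + 2h
  obtain ⟨t₂, ht₂B, ht₂lt⟩ := exists_lt_of_csInf_lt hBεne
    (show Tε < Tε + h by linarith)
  obtain ⟨ht₂pos, u₂, hu₂, hyt₂⟩ := ht₂B
  rw [hysoleps] at hyt₂
  have ht₂TT : t₂ + h ≤ TT := by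
    rw [hTTdef]
    have : t₂ < Tε + h := ht₂lt
    have : Tε ≤ t₁ + h := hTεub
    have : t₁ < Tstar + h := ht₁lt
    linarith
  obtain ⟨w₂, hw₂M, hw₂val⟩ := stmt8_core S (Seps ε) S R M B' K delta0 t₂ h κ ρ y0
    hM hB'0 hRB hK hdelta0 ht₂pos hhpos hκ0 hκ1 hρpos hS0 hsemi hScont hcontr
    (hdecay h hhpos.le)
    (fun τ hτ0 hτle x => hQcl τ hτ0 (by linarith [ht₂TT, hhpos] : τ ≤ TT) x)
    (fun τ _ _ x => by rw [sub_self, norm_zero]; exact mul_nonneg hκ0 (norm_nonneg x))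
    hScont u₂ hu₂ hyt₂
  have hmem2 : (t₂ + h) ∈ Bset := by
    refine ⟨by linarith, w₂, hw₂M, ?_⟩
    rw [hysol]
    exact le_trans hw₂val (harith t₂ ht₂pos (by linarith))
  have hTstarub : Tstar ≤ t₂ + h := by
    rw [hTstardef]
    exact csInf_le hBbdd hmem2
  -- combine
  rw [Real.dist_eq, abs_sub_lt_iff]
  constructor
  · -- Tε - Tstar < δ'
    have : Tε ≤ t₁ + h := hTεub
    linarith
  · -- Tstar - Tε < δ'
    have : Tstar ≤ t₂ + h := hTstarub
    linarith
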